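/- For a prime p and integer k ≥ 1, the weight on ℤ_{p^k} defined by w(0)=0, w(x) = p/(p−1) if x ∈ p^{k−1}ℤ_{p^k} \ {0}, and w(x)=1 otherwise, is a homogeneous weight (with average value γ = 1). -/
import Mathlib


open scoped BigOperators Classical

/-- for a prime `p` and `k ≥ 1`, the weight on `ℤ_{p^k}` given by
`w 0 = 0`, `w x = p/(p-1)` for nonzero `x ∈ p^{k-1}ℤ_{p^k}` and `w x = 1` otherwise,
is a homogeneous weight with average value `γ = 1`. -/
theorem stmt3 (p k : ℕ) (hp : p.Prime) (hk : 1 ≤ k) (w : ZMod (p ^ k) → ℝ)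
    (hw0 : w 0 = 0)
    (hwsoc : ∀ x : ZMod (p ^ k), x ≠ 0 →
      x ∈ Submodule.span (ZMod (p ^ k)) {((p : ZMod (p ^ k)) ^ (k - 1))} →
      w x = (p : ℝ) / ((p : ℝ) - 1))
    (hwother : ∀ x : ZMod (p ^ k),
      x ∉ Submodule.span (ZMod (p ^ k)) {((p : ZMod (p ^ k)) ^ (k - 1))} → w x = 1) :
    (∀ x y : ZMod (p ^ k),
        Submodule.span (ZMod (p ^ k)) {x} = Submodule.span (ZMod (p ^ k)) {y} → w x = w y) ∧
    (∀ x : ZMod (p ^ k), x ≠ 0 →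
      ∑ᶠ y ∈ (Submodule.span (ZMod (p ^ k)) {x} : Set (ZMod (p ^ k))), w y =
        1 * (Nat.card (Submodule.span (ZMod (p ^ k)) {x}) : ℝ)) := by
  haveI : NeZero (p ^ k) := ⟨pow_ne_zero k hp.ne_zero⟩
  set s : ZMod (p ^ k) := (p : ZMod (p ^ k)) ^ (k - 1) with hs_def
  -- span of a singleton as a set equals the set of integer multiples
  have hspan_mul : ∀ a : ZMod (p ^ k),
      (Submodule.span (ZMod (p ^ k)) {a} : Set (ZMod (p ^ k))) = (AddSubgroup.zmultiples a : Set (ZMod (p ^ k))) := by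
    intro a
    ext y
    simp only [SetLike.mem_coe, Submodule.mem_span_singleton,
      AddSubgroup.mem_zmultiples_iff]
    constructor
    · rintro ⟨c, rfl⟩
      refine ⟨(c.val : ℤ), ?_⟩
      rw [zsmul_eq_mul, smul_eq_mul]
      push_cast
      rw [ZMod.natCast_rightInverse c]
    · rintro ⟨n, rfl⟩
      refine ⟨(n : ZMod (p ^ k)), ?_⟩
      rw [zsmul_eq_mul, smul_eq_mul]
  -- the socle generator lies in every nonzero cyclic submodule
  have hsoc_le : ∀ x : ZMod (p ^ k), x ≠ 0 → s ∈ Submodule.span (ZMod (p ^ k)) {x} := by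
    intro x hx
    set a : ℕ := x.val with ha_def
    have ha0 : a ≠ 0 := fun h => hx ((ZMod.val_eq_zero x).mp h)
    set j : ℕ := a.factorization p with hj_def
    have hdvd : p ^ j ∣ a := Nat.ordProj_dvd a p
    set m : ℕ := a / p ^ j with hm_def
    have hpm : ¬ p ∣ m := Nat.not_dvd_ordCompl hp ha0
    have ham : p ^ j * m = a := Nat.ordProj_mul_ordCompl_eq_self a p
    have hjk : j ≤ k - 1 := by
      have h1 : p ^ j ≤ a := Nat.le_of_dvd (Nat.pos_of_ne_zero ha0) hdvd
      have h2 : a < p ^ k := ZMod.val_lt x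
      have : j < k := (Nat.pow_lt_pow_iff_right hp.one_lt).mp (lt_of_le_of_lt h1 h2)
      omega
    have hcop : m.Coprime (p ^ k) :=
      Nat.Coprime.pow_right k ((hp.coprime_iff_not_dvd.mpr hpm).symm)
    obtain ⟨u, hu⟩ := (ZMod.isUnit_iff_coprime m (p ^ k)).mpr hcop
    have hxa : ((a : ℕ) : ZMod (p ^ k)) = x := ZMod.natCast_rightInverse x
    have hxeq : x = (p : ZMod (p ^ k)) ^ j * (u : ZMod (p ^ k)) := by
      rw [hu, ← hxa, ← ham]
      push_cast
      ring
    have : ((p : ZMod (p ^ k)) ^ (k - 1 - j) * (u⁻¹ : Units (ZMod (p ^ k)))) * x = s := by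
      rw [hxeq, hs_def]
      calc ((p : ZMod (p ^ k)) ^ (k - 1 - j) * (u⁻¹ : Units (ZMod (p ^ k)))) * ((p : ZMod (p ^ k)) ^ j * (u : ZMod (p ^ k)))
          = (p : ZMod (p ^ k)) ^ (k - 1 - j) * (p : ZMod (p ^ k)) ^ j * ((u⁻¹ : Units (ZMod (p ^ k))) * (u : ZMod (p ^ k))) := by ring
        _ = (p : ZMod (p ^ k)) ^ (k - 1 - j + j) * 1 := by rw [pow_add, u.inv_mul]
        _ = (p : ZMod (p ^ k)) ^ (k - 1) := by rw [Nat.sub_add_cancel hjk, mul_one]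
    exact Submodule.mem_span_singleton.mpr ⟨_, by rw [smul_eq_mul]; exact this⟩
  -- cardinality of the socle
  have hcardS : Nat.card (Submodule.span (ZMod (p ^ k)) {s}) = p := by
    have h1 : Nat.card (Submodule.span (ZMod (p ^ k)) {s}) =
        Nat.card (AddSubgroup.zmultiples s) := by
      have := hspan_mul s
      simp only [← SetLike.coe_sort_coe, this]
    rw [h1, Nat.card_zmultiples]
    have hs' : s = ((p ^ (k - 1) : ℕ) : ZMod (p ^ k)) := by push_cast [hs_def]; ring
    rw [hs', ZMod.addOrderOf_coe _ (pow_ne_zero k hp.ne_zero)]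
    have hg : Nat.gcd (p ^ k) (p ^ (k - 1)) = p ^ (k - 1) :=
      Nat.gcd_eq_right (pow_dvd_pow p (by omega))
    rw [hg, Nat.pow_div (by omega) hp.pos, Nat.sub_sub_self hk, pow_one]
  have hp1 : (1 : ℝ) < (p : ℝ) := by exact_mod_cast hp.one_lt
  constructor
  · -- generating the same submodule gives equal weight
    intro x y h
    by_cases hx : x = 0
    · subst hx
      have : Submodule.span (ZMod (p ^ k)) {y} = ⊥ := by
        rw [← h, Submodule.span_singleton_eq_bot.mpr rfl]
      have hy : y = 0 := Submodule.span_singleton_eq_bot.mp this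
      rw [hy]
    · have hy : y ≠ 0 := by
        intro hy0
        apply hx
        exact Submodule.span_singleton_eq_bot.mp
          (by rw [h, hy0, Submodule.span_singleton_eq_bot])
      have hmem : x ∈ Submodule.span (ZMod (p ^ k)) {s} ↔ y ∈ Submodule.span (ZMod (p ^ k)) {s} := by
        rw [← Submodule.span_singleton_le_iff_mem, ← Submodule.span_singleton_le_iff_mem, h]
      by_cases hxs : x ∈ Submodule.span (ZMod (p ^ k)) {s}
      · rw [hwsoc x hx hxs, hwsoc y hy (hmem.mp hxs)]
      · rw [hwother x hxs, hwother y (fun hys => hxs (hmem.mpr hys))]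
  · -- the sum over a nonzero cyclic submodule
    intro x hx
    have hle' : Submodule.span (ZMod (p ^ k)) {s} ≤ Submodule.span (ZMod (p ^ k)) {x} :=
      (Submodule.span_singleton_le_iff_mem s _).mpr (hsoc_le x hx)
    have hSsub : (Submodule.span (ZMod (p ^ k)) {s} : Set (ZMod (p ^ k))) ⊆ (Submodule.span (ZMod (p ^ k)) {x} : Set (ZMod (p ^ k))) :=
      fun y hy => hle' hy
    have hfinI : (Submodule.span (ZMod (p ^ k)) {x} : Set (ZMod (p ^ k))).Finite := Set.toFinite _
    have hfinS : (Submodule.span (ZMod (p ^ k)) {s} : Set (ZMod (p ^ k))).Finite := Set.toFinite _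
    set T : Finset (ZMod (p ^ k)) := hfinI.toFinset with hT
    set SF : Finset (ZMod (p ^ k)) := hfinS.toFinset with hSF
    have hsub : SF ⊆ T := by
      rw [hSF, hT, Set.Finite.toFinset_subset_toFinset]
      exact hSsub
    have h0SF : (0 : ZMod (p ^ k)) ∈ SF := by
      rw [hSF, Set.Finite.mem_toFinset]
      exact Submodule.zero_mem _
    have hcardSF : SF.card = p := by
      have h := hcardS
      rw [← SetLike.coe_sort_coe, Nat.card_coe_set_eq,
        Set.ncard_eq_toFinset_card _ hfinS, ← hSF] at h
      exact h
    have hcardT : (Nat.card (Submodule.span (ZMod (p ^ k)) {x}) : ℝ) = (T.card : ℝ) := by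
      rw [← SetLike.coe_sort_coe, Nat.card_coe_set_eq,
        Set.ncard_eq_toFinset_card _ hfinI]
    rw [finsum_mem_eq_finite_toFinset_sum w hfinI, ← hT]
    rw [← Finset.sum_sdiff hsub]
    have hsum1 : ∑ y ∈ T \ SF, w y = ((T.card - SF.card : ℕ) : ℝ) := by
      have h1 : ∀ y ∈ T \ SF, w y = 1 := by
        intro y hy
        simp only [Finset.mem_sdiff, hSF, Set.Finite.mem_toFinset, SetLike.mem_coe] at hy
        exact hwother y hy.2
      rw [Finset.sum_congr rfl h1, Finset.sum_const, Finset.card_sdiff_of_subset hsub,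
        nsmul_eq_mul, mul_one]
    have hsum2 : ∑ y ∈ SF, w y = ((SF.card - 1 : ℕ) : ℝ) * ((p : ℝ) / ((p : ℝ) - 1)) := by
      rw [← Finset.sum_erase_add SF w h0SF, hw0, add_zero]
      have h2 : ∀ y ∈ SF.erase 0, w y = (p : ℝ) / ((p : ℝ) - 1) := by
        intro y hy
        simp only [Finset.mem_erase, hSF, Set.Finite.mem_toFinset, SetLike.mem_coe] at hy
        exact hwsoc y hy.1 hy.2
      rw [Finset.sum_congr rfl h2, Finset.sum_const, Finset.card_erase_of_mem h0SF,
        nsmul_eq_mul]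
    rw [hsum1, hsum2, hcardT, hcardSF, one_mul]
    have hle : p ≤ T.card := le_trans (le_of_eq hcardSF.symm) (Finset.card_le_card hsub)
    have hpne : (p : ℝ) - 1 ≠ 0 := by linarith
    have h2 : ((p - 1 : ℕ) : ℝ) * ((p : ℝ) / ((p : ℝ) - 1)) = (p : ℝ) := by
      have : ((p - 1 : ℕ) : ℝ) = (p : ℝ) - 1 := by
        push_cast [Nat.cast_sub hp.one_lt.le]; ring
      rw [this]
      field_simp
    rw [h2]
    push_cast [Nat.cast_sub hle]
    ring
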